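/- Let Ω_1,...,Ω_p be nonempty closed convex sets in R^n, S a nonempty closed convex set disjoint from each Ω_i, α_i > 0, λ > 0, v ∈ R^n, and φ_v(x) = Σ_i α_i d(x; Ω_i) + (λ/2)‖x‖² − ⟨v, x⟩. Define F_v(x) = (Σ_i α_i P(x; Ω_i)/d(x; Ω_i) + v) / (Σ_i α_i/d(x; Ω_i) + λ) for x ∈ S. If x ∈ S and z̄ := P(F_v(x); S) ≠ x, then φ_v(z̄) < φ_v(x). -/

import Mathlib

open RealInnerProductSpace

open Classical in
noncomputable def proj (n : ℕ) (Q : Set (EuclideanSpace ℝ (Fin n)))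
    (x : EuclideanSpace ℝ (Fin n)) : EuclideanSpace ℝ (Fin n) :=
  if h : ∃ p ∈ Q, dist x p = Metric.infDist x Q then h.choose else x

noncomputable def phi (n p : ℕ) (Ω : Fin p → Set (EuclideanSpace ℝ (Fin n)))
    (α : Fin p → ℝ) (lam : ℝ) (v x : EuclideanSpace ℝ (Fin n)) : ℝ :=
  ∑ i, α i * Metric.infDist x (Ω i) + lam / 2 * ‖x‖ ^ 2 - (inner ℝ v x : ℝ)

noncomputable def Fmap (n p : ℕ) (Ω : Fin p → Set (EuclideanSpace ℝ (Fin n)))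
    (α : Fin p → ℝ) (lam : ℝ) (v x : EuclideanSpace ℝ (Fin n)) :
    EuclideanSpace ℝ (Fin n) :=
  (∑ i, α i / Metric.infDist x (Ω i) + lam)⁻¹ •
    ((∑ i, (α i / Metric.infDist x (Ω i)) • proj n (Ω i) x) + v)

lemma proj_spec (n : ℕ) (Q : Set (EuclideanSpace ℝ (Fin n))) (hne : Q.Nonempty)
    (hc : IsClosed Q) (x : EuclideanSpace ℝ (Fin n)) :
    proj n Q x ∈ Q ∧ dist x (proj n Q x) = Metric.infDist x Q := by
  have h : ∃ q ∈ Q, dist x q = Metric.infDist x Q := by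
    obtain ⟨y, hy, hd⟩ := hc.exists_infDist_eq_dist hne x
    exact ⟨y, hy, hd.symm⟩
  rw [proj, dif_pos h]
  exact ⟨h.choose_spec.1, h.choose_spec.2⟩

lemma expand_sq {E : Type*} [NormedAddCommGroup E] [InnerProductSpace ℝ E]
    (a b c : E) : ‖a - c‖ ^ 2 = ‖a - b‖ ^ 2 + ‖b - c‖ ^ 2 + 2 * ⟪a - b, b - c⟫ := by
  have h : a - c = (a - b) + (b - c) := by abel
  rw [h, norm_add_sq_real]; ring

lemma core {E : Type*} [NormedAddCommGroup E] [InnerProductSpace ℝ E] (p : ℕ)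
    (d : Fin p → ℝ) (hd : ∀ i, 0 < d i) (α : Fin p → ℝ) (hα : ∀ i, 0 < α i)
    (P : Fin p → E) (lam : ℝ) (hlam : 0 < lam) (v x zb F : E)
    (hF : (∑ i, α i / d i + lam) • F = (∑ i, (α i / d i) • P i) + v)
    (hproj : ⟪F - zb, x - zb⟫ ≤ 0)
    (hne : zb ≠ x)
    (hxP : ∀ i, ‖x - P i‖ = d i)
    (Dz : Fin p → ℝ) (hDz : ∀ i, 0 ≤ Dz i) (hDzle : ∀ i, Dz i ≤ ‖zb - P i‖) :
    (∑ i, α i * Dz i) + lam / 2 * ‖zb‖ ^ 2 - ⟪v, zb⟫ <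
      (∑ i, α i * d i) + lam / 2 * ‖x‖ ^ 2 - ⟪v, x⟫ := by
  have hWpos : 0 < ∑ i, α i / d i + lam :=
    add_pos_of_nonneg_of_pos
      (Finset.sum_nonneg fun i _ => (div_pos (hα i) (hd i)).le) hlam
  -- Step 1: quadratic surrogate descent
  have hA : (∑ i, (α i / d i) * ‖x - P i‖ ^ 2) =
      (∑ i, (α i / d i) * ‖zb - P i‖ ^ 2) + (∑ i, α i / d i) * ‖x - zb‖ ^ 2 +
        2 * (∑ i, (α i / d i) * ⟪x - zb, zb - P i⟫) := by
    rw [Finset.sum_mul, Finset.mul_sum, ← Finset.sum_add_distrib, ← Finset.sum_add_distrib]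
    refine Finset.sum_congr rfl fun i _ => ?_
    rw [expand_sq x zb (P i)]; ring
  have hB : ‖x‖ ^ 2 = ‖x - zb‖ ^ 2 + ‖zb‖ ^ 2 + 2 * ⟪x - zb, zb⟫ := by
    have := expand_sq x zb (0 : E)
    simpa using this
  have hC : ⟪v, x⟫ - ⟪v, zb⟫ = ⟪x - zb, v⟫ := by
    rw [← inner_sub_right, real_inner_comm]
  have hT : (∑ i, (α i / d i) • (zb - P i)) + lam • zb - v =
      (∑ i, α i / d i + lam) • (zb - F) := by
    rw [smul_sub, hF]
    simp only [smul_sub, Finset.sum_sub_distrib, ← Finset.sum_smul, add_smul]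
    abel
  have hKey : (∑ i, (α i / d i) * ⟪x - zb, zb - P i⟫) + lam * ⟪x - zb, zb⟫ -
      ⟪x - zb, v⟫ = (∑ i, α i / d i + lam) * ⟪x - zb, zb - F⟫ := by
    have h1 : ⟪x - zb, (∑ i, (α i / d i) • (zb - P i)) + lam • zb - v⟫ =
        (∑ i, α i / d i + lam) * ⟪x - zb, zb - F⟫ := by
      rw [hT, real_inner_smul_right]
    rw [← h1]
    simp [inner_add_right, inner_sub_right, inner_sum, real_inner_smul_right]
  have hGdiff : ((∑ i, (α i / d i) * ‖x - P i‖ ^ 2) + lam * ‖x‖ ^ 2 - 2 * ⟪v, x⟫) -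
      ((∑ i, (α i / d i) * ‖zb - P i‖ ^ 2) + lam * ‖zb‖ ^ 2 - 2 * ⟪v, zb⟫) =
      (∑ i, α i / d i + lam) * ‖x - zb‖ ^ 2 +
        2 * ((∑ i, α i / d i + lam) * ⟪x - zb, zb - F⟫) := by
    linear_combination hA + lam * hB - 2 * hC + 2 * hKey
  have hproj' : 0 ≤ ⟪x - zb, zb - F⟫ := by
    have h1 : ⟪x - zb, zb - F⟫ = -⟪F - zb, x - zb⟫ := by
      rw [real_inner_comm, show zb - F = -(F - zb) by abel, inner_neg_left]
    rw [h1]; linarith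
  have hu2 : 0 < ‖x - zb‖ ^ 2 := by
    have h0 : x - zb ≠ 0 := sub_ne_zero.mpr (Ne.symm hne)
    exact pow_pos (norm_pos_iff.mpr h0) 2
  have hpos : 0 < (∑ i, α i / d i + lam) * ‖x - zb‖ ^ 2 := mul_pos hWpos hu2
  have hnn : 0 ≤ (∑ i, α i / d i + lam) * ⟪x - zb, zb - F⟫ :=
    mul_nonneg hWpos.le hproj'
  -- Step 2: majorization
  have hMaj : ∀ i, 2 * (α i * Dz i) ≤ (α i / d i) * ‖zb - P i‖ ^ 2 + α i * d i := by
    intro i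
    have h1 : Dz i ≤ ‖zb - P i‖ := hDzle i
    have h3 : 0 < d i := hd i
    have h4 : 0 < α i := hα i
    have k2 : 2 * d i * Dz i ≤ ‖zb - P i‖ ^ 2 + d i ^ 2 := by
      nlinarith [sq_nonneg (‖zb - P i‖ - d i), hDz i]
    have e : (α i / d i) * ‖zb - P i‖ ^ 2 + α i * d i =
        (α i * (‖zb - P i‖ ^ 2 + d i ^ 2)) / d i := by
      field_simp
    rw [e, le_div_iff₀ h3]
    calc 2 * (α i * Dz i) * d i = α i * (2 * d i * Dz i) := by ring
      _ ≤ α i * (‖zb - P i‖ ^ 2 + d i ^ 2) := by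
          exact mul_le_mul_of_nonneg_left k2 h4.le
  have hMajS : 2 * (∑ i, α i * Dz i) ≤
      (∑ i, (α i / d i) * ‖zb - P i‖ ^ 2) + ∑ i, α i * d i := by
    have h := Finset.sum_le_sum (s := Finset.univ) (fun i _ => hMaj i)
    calc 2 * (∑ i, α i * Dz i) = ∑ i, 2 * (α i * Dz i) := by rw [Finset.mul_sum]
      _ ≤ ∑ i, ((α i / d i) * ‖zb - P i‖ ^ 2 + α i * d i) := h
      _ = _ := Finset.sum_add_distrib
  have hEqS : 2 * (∑ i, α i * d i) =
      (∑ i, (α i / d i) * ‖x - P i‖ ^ 2) + ∑ i, α i * d i := by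
    rw [Finset.mul_sum, ← Finset.sum_add_distrib]
    refine Finset.sum_congr rfl fun i _ => ?_
    have h3 : d i ≠ 0 := (hd i).ne'
    rw [hxP i]
    field_simp
    ring
  linarith

theorem weiszfeld_strict_descent (n p : ℕ)
    (Ω : Fin p → Set (EuclideanSpace ℝ (Fin n)))
    (hΩ : ∀ i, (Ω i).Nonempty ∧ IsClosed (Ω i) ∧ Convex ℝ (Ω i))
    (S : Set (EuclideanSpace ℝ (Fin n)))
    (hS : S.Nonempty) (hSc : IsClosed S) (hSconv : Convex ℝ S)
    (hdisj : ∀ i, S ∩ Ω i = ∅)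
    (α : Fin p → ℝ) (hα : ∀ i, 0 < α i)
    (lam : ℝ) (hlam : 0 < lam)
    (v : EuclideanSpace ℝ (Fin n))
    (x : EuclideanSpace ℝ (Fin n)) (hx : x ∈ S)
    (zb : EuclideanSpace ℝ (Fin n)) (hzb : zb = proj n S (Fmap n p Ω α lam v x))
    (hne : zb ≠ x) :
    phi n p Ω α lam v zb < phi n p Ω α lam v x := by
  have hxN : ∀ i, x ∉ Ω i := by
    intro i hmem
    exact Set.eq_empty_iff_forall_notMem.mp (hdisj i) x ⟨hx, hmem⟩
  have hd : ∀ i, 0 < Metric.infDist x (Ω i) := fun i =>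
    ((hΩ i).2.1.notMem_iff_infDist_pos (hΩ i).1).1 (hxN i)
  set F := Fmap n p Ω α lam v x with hFdef
  have hWpos : 0 < ∑ i, α i / Metric.infDist x (Ω i) + lam :=
    add_pos_of_nonneg_of_pos
      (Finset.sum_nonneg fun i _ => (div_pos (hα i) (hd i)).le) hlam
  have hF : (∑ i, α i / Metric.infDist x (Ω i) + lam) • F =
      (∑ i, (α i / Metric.infDist x (Ω i)) • proj n (Ω i) x) + v := by
    rw [hFdef, Fmap, smul_smul, mul_inv_cancel₀ hWpos.ne', one_smul]
  obtain ⟨hzbS, hzbdist⟩ : zb ∈ S ∧ dist F zb = Metric.infDist F S := by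
    rw [hzb]; exact proj_spec n S hS hSc F
  have hmin : ‖F - zb‖ = ⨅ w : S, ‖F - w‖ := by
    rw [← dist_eq_norm, hzbdist, Metric.infDist_eq_iInf]
    simp_rw [dist_eq_norm]
  have hproj : ⟪F - zb, x - zb⟫ ≤ 0 :=
    (norm_eq_iInf_iff_real_inner_le_zero hSconv hzbS).1 hmin x hx
  have hxP : ∀ i, ‖x - proj n (Ω i) x‖ = Metric.infDist x (Ω i) := fun i => by
    rw [← dist_eq_norm]; exact (proj_spec n (Ω i) (hΩ i).1 (hΩ i).2.1 x).2
  have hDzle : ∀ i, Metric.infDist zb (Ω i) ≤ ‖zb - proj n (Ω i) x‖ := fun i => by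
    rw [← dist_eq_norm]
    exact Metric.infDist_le_dist_of_mem (proj_spec n (Ω i) (hΩ i).1 (hΩ i).2.1 x).1
  have hmain := core p (fun i => Metric.infDist x (Ω i)) hd α hα
    (fun i => proj n (Ω i) x) lam hlam v x zb F hF hproj hne hxP
    (fun i => Metric.infDist zb (Ω i)) (fun i => Metric.infDist_nonneg) hDzle
  simpa [phi] using hmain
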